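/- Let M and N be quantum channels such that M ≾_q N, i.e. R_{ρ_{ABX}}(M) ≤ R_{ρ_{ABX}}(N) for every quantum channel gambling game ρ_{ABX}. Then the maximal output purity of N dominates that of M: sup over input density matrices ρ of Tr[N(ρ)²] is at least sup over input density matrices ρ of Tr[M(ρ)²]. -/

import Mathlib

open Matrix Kronecker
open scoped ComplexOrder

noncomputable section

open scoped Classical

/-- Square complex matrices of size `n`. -/
abbrev Mat (n : ℕ) := Matrix (Fin n) (Fin n) ℂ

/-- Bipartite matrices on `ℂ^a ⊗ ℂ^b`. -/
abbrev BMat (a b : ℕ) := Matrix (Fin a × Fin b) (Fin a × Fin b) ℂ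

/-- A density matrix: positive semidefinite with trace one. -/
def IsDensity {ι : Type} [Fintype ι] (ρ : Matrix ι ι ℂ) : Prop :=
  ρ.PosSemidef ∧ ρ.trace = 1

/-- The maximally mixed state `I/n`. -/
def uMat (n : ℕ) : Mat n := (n : ℂ)⁻¹ • 1

/-- Choi matrix of a map on matrices. -/
def choi {ι κ : Type} [Fintype ι] [DecidableEq ι]
    (Φ : Matrix ι ι ℂ → Matrix κ κ ℂ) : Matrix (ι × κ) (ι × κ) ℂ :=
  fun p q => Φ (Matrix.single p.1 q.1 1) p.2 q.2

/-- Quantum channel: linear, trace preserving, completely positive map. -/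
def IsCPTP {ι κ : Type} [Fintype ι] [DecidableEq ι] [Fintype κ]
    (Φ : Matrix ι ι ℂ → Matrix κ κ ℂ) : Prop :=
  IsLinearMap ℂ Φ ∧ (∀ X, (Φ X).trace = X.trace) ∧ (choi Φ).PosSemidef

/-- Completely positive (not necessarily trace-preserving) map. -/
def IsCP {ι κ : Type} [Fintype ι] [DecidableEq ι] [Fintype κ]
    (Φ : Matrix ι ι ℂ → Matrix κ κ ℂ) : Prop :=
  IsLinearMap ℂ Φ ∧ (choi Φ).PosSemidef

/-- Partial trace over the first tensor factor. -/
def ptraceA {α β : Type} [Fintype α] (M : Matrix (α × β) (α × β) ℂ) :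
    Matrix β β ℂ := fun j j' => ∑ i, M (i, j) (i, j')

/-- Partial trace over the second tensor factor. -/
def ptraceB {α β : Type} [Fintype β] (M : Matrix (α × β) (α × β) ℂ) :
    Matrix α α ℂ := fun i i' => ∑ j, M (i, j) (i', j)

/-- The map `Φ ⊗ id` acting on the first tensor factor. -/
def lTensorId {α α' β : Type} (Φ : Matrix α α ℂ → Matrix α' α' ℂ)
    (X : Matrix (α × β) (α × β) ℂ) : Matrix (α' × β) (α' × β) ℂ :=
  fun p q => Φ (fun k k' => X (k, p.2) (k', q.2)) p.1 q.1

/-- The map `id ⊗ Φ` acting on the second tensor factor. -/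
def rTensorId {α β β' : Type} (Φ : Matrix β β ℂ → Matrix β' β' ℂ)
    (X : Matrix (α × β) (α × β) ℂ) : Matrix (α × β') (α × β') ℂ :=
  fun p q => Φ (fun k k' => X (p.1, k) (q.1, k')) p.2 q.2

/-- `A ↛ B'` semi-causality of a bipartite channel. -/
def SemiCausal {a b b' : ℕ} (N : BMat a b → BMat a b') : Prop :=
  ∀ M : Mat a → Mat a, IsCPTP M →
    ∀ X : BMat a b, ptraceA (N (lTensorId M X)) = ptraceA (N X)

/-- Conditional unitality of a bipartite channel. -/
def CondUnital {a b b' : ℕ} (N : BMat a b → BMat a b') : Prop :=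
  ∀ ρ : Mat b, IsDensity ρ →
    ∃ σ : Mat b', IsDensity σ ∧ N (uMat a ⊗ₖ ρ) = uMat a ⊗ₖ σ

/-- Conditionally unital semi-causal channels. -/
def CUSC {a b b' : ℕ} (N : BMat a b → BMat a b') : Prop :=
  IsCPTP N ∧ CondUnital N ∧ SemiCausal N

/-- The channel `X ↦ V X V†` associated with a matrix `V`. -/
def isomChannel {a a' : ℕ} (V : Matrix (Fin a') (Fin a) ℂ) (X : Mat a) : Mat a' :=
  V * X * Vᴴ

/-- Conditional majorization `σ ≾_A ρ`. -/
def CondMajor {a' b' a b : ℕ} (σ : BMat a' b') (ρ : BMat a b) : Prop :=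
  (a ≤ a' ∧ ∃ V : Matrix (Fin a') (Fin a) ℂ, Vᴴ * V = 1 ∧
      ∃ N : BMat a b → BMat a b', CUSC N ∧ σ = lTensorId (isomChannel V) (N ρ)) ∨
  (a' ≤ a ∧ ∃ U : Matrix (Fin a) (Fin a') ℂ, Uᴴ * U = 1 ∧
      ∃ N : BMat a b → BMat a b', CUSC N ∧ lTensorId (isomChannel U) σ = N ρ)

/-- The tensor product `ρ_{AB} ⊗ τ_{A'B'}` regrouped as a state on `(AA')(BB')`. -/
def prodState {a b a' b' : ℕ} (ρ : BMat a b) (τ : BMat a' b') :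
    BMat (a * a') (b * b') := fun p q =>
  ρ ((finProdFinEquiv.symm p.1).1, (finProdFinEquiv.symm p.2).1)
    ((finProdFinEquiv.symm q.1).1, (finProdFinEquiv.symm q.2).1) *
  τ ((finProdFinEquiv.symm p.1).2, (finProdFinEquiv.symm p.2).2)
    ((finProdFinEquiv.symm q.1).2, (finProdFinEquiv.symm q.2).2)

/-- A conditional entropy: a real function on bipartite density matrices of all
finite dimensions, monotone under conditional majorization, additive under tensor
products, and normalized to `1` on the one-qubit maximally mixed state. -/
structure CondEntropy where
  H : ∀ {a b : ℕ}, BMat a b → ℝ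
  mono : ∀ {a b a' b' : ℕ} (ρ : BMat a b) (σ : BMat a' b'),
    IsDensity ρ → IsDensity σ → CondMajor σ ρ → H ρ ≤ H σ
  additive : ∀ {a b a' b' : ℕ} (ρ : BMat a b) (τ : BMat a' b'),
    IsDensity ρ → IsDensity τ → H (prodState ρ τ) = H ρ + H τ
  normalized : H (uMat 2 ⊗ₖ (1 : Mat 1)) = 1

/-- Maximally entangled state `φ⁺` on `ℂ^d ⊗ ℂ^d`. -/
def maxEnt (d : ℕ) : BMat d d :=
  fun p q => if p.1 = p.2 ∧ q.1 = q.2 then (d : ℂ)⁻¹ else 0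

/-- The sum of the `k` largest values of `f`. -/
def sumTopK {ι : Type} [Fintype ι] [DecidableEq ι] (k : ℕ) (f : ι → ℝ) : ℝ :=
  (Finset.univ.powerset.filter fun s : Finset ι => s.card ≤ k).sup'
    ⟨∅, Finset.mem_filter.mpr ⟨Finset.mem_powerset.mpr (Finset.empty_subset _), by simp⟩⟩
    fun s => ∑ i ∈ s, f i

/-- Ky Fan `k`-norm (sum of the `k` largest eigenvalues) of a hermitian matrix. -/
def kyFan {ι : Type} [Fintype ι] [DecidableEq ι] (k : ℕ) (X : Matrix ι ι ℂ) : ℝ :=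
  if h : X.IsHermitian then sumTopK k h.eigenvalues else 0

/-- The rank-one projector `|v⟩⟨v|`. -/
def projv {n : ℕ} (v : Fin n → ℂ) : Mat n := fun i j => v i * star (v j)

/-- A rank-one projective measurement, given by an orthonormal family of vectors. -/
def IsRankOneMeas {n : ℕ} (u : Fin n → Fin n → ℂ) : Prop :=
  ∀ z z', (∑ i, star (u z i) * u z' i) = if z = z' then 1 else 0

/-- A column-stochastic matrix. -/
def ColStochastic {a c : ℕ} (T : Matrix (Fin a) (Fin c) ℝ) : Prop :=
  (∀ w z, 0 ≤ T w z) ∧ ∀ z, ∑ w, T w z = 1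

/-- Reward of the bipartite gambling game `(T, 0)` (no adversary). -/
def R0 {a b c : ℕ} (T : Matrix (Fin a) (Fin c) ℝ) (ρ : BMat a b) : ℝ :=
  ⨆ u : {u : Fin b → Fin b → ℂ // IsRankOneMeas u}, ⨆ f : Fin b → Fin c,
    ∑ z, ∑ w, T w (f z) *
      kyFan (w.1 + 1)
        (ptraceB (((1 : Mat a) ⊗ₖ projv (u.1 z)) * ρ * ((1 : Mat a) ⊗ₖ projv (u.1 z))))

/-- Reward of the bipartite gambling game `(T, p)`. -/
def Rgame {a b c : ℕ} (T : Matrix (Fin a) (Fin c) ℝ) (p : ℝ) (ρ : BMat a b) : ℝ :=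
  p * (⨅ v : {v : Fin a → Fin a → ℂ // IsRankOneMeas v},
        R0 T (∑ j, (projv (v.1 j) ⊗ₖ (1 : Mat b)) * ρ * (projv (v.1 j) ⊗ₖ (1 : Mat b)))) +
  (1 - p) * R0 T ρ

/-- Reward of a quantum-channel gambling game `ρ_{ABX} = Σ_x p_x ρ^{(x)}_{AB} ⊗ |x⟩⟨x|`
for a channel `N` with output system `A`. -/
def Rch {n m dA b ℓ : ℕ} (N : Mat n → Mat m)
    (p : Fin ℓ → ℝ) (ρx : Fin ℓ → BMat dA b) : ℝ :=
  ⨆ E : {E : Mat dA → Mat n // IsCPTP E},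
    ∑ x, p x * kyFan (x.1 + 1) (lTensorId (fun Y => N (E.1 Y)) (ρx x))

/-- The classical channel induced by a column-stochastic transition matrix. -/
def classicalChannel {x y : ℕ} (P : Matrix (Fin y) (Fin x) ℝ) : Mat x → Mat y :=
  fun ρ => Matrix.of fun i j => if i = j then ∑ k, (P i k : ℂ) * ρ k k else 0

/-- Classical game reward `Prob_T` of a classical channel with transition matrix `P`. -/
def ProbT {yd xd wn zn : ℕ} (P : Matrix (Fin yd) (Fin xd) ℝ)
    (T : Matrix (Fin wn) (Fin zn) ℝ) : ℝ :=
  ∑ z, ⨆ x : Fin xd, ∑ w, T w z * sumTopK (w.1 + 1) (fun i => P i x)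

/-- A joint probability matrix. -/
def JointProb {m n : ℕ} (P : Matrix (Fin m) (Fin n) ℝ) : Prop :=
  (∀ x y, 0 ≤ P x y) ∧ ∑ x, ∑ y, P x y = 1

/-- A row-stochastic matrix. -/
def RowStochastic {n n' : ℕ} (t : Matrix (Fin n) (Fin n') ℝ) : Prop :=
  (∀ y w, 0 ≤ t y w) ∧ ∀ y, ∑ w, t y w = 1

/-- A doubly stochastic matrix. -/
def IsDoublyStochastic {m : ℕ} (d : Matrix (Fin m) (Fin m) ℝ) : Prop :=
  (∀ i j, 0 ≤ d i j) ∧ (∀ i, ∑ j, d i j = 1) ∧ (∀ j, ∑ i, d i j = 1)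

/-- The quantum channel induced by a (doubly) stochastic matrix. -/
def dsChannel {m : ℕ} (d : Matrix (Fin m) (Fin m) ℝ) : Mat m → Mat m :=
  fun ρ => Matrix.of fun x x' => if x = x' then ∑ y, (d x y : ℂ) * ρ y y else 0

/-- Diagonal bipartite state associated with a joint probability matrix. -/
def classicalState {m n : ℕ} (P : Matrix (Fin m) (Fin n) ℝ) : BMat m n :=
  Matrix.of fun p q => if p = q then (P p.1 p.2 : ℂ) else 0

/-- von Neumann entropy `S(ρ) = -Σ λ_i log₂ λ_i`. -/
def vnEntropy {ι : Type} [Fintype ι] [DecidableEq ι] (ρ : Matrix ι ι ℂ) : ℝ :=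
  if h : ρ.IsHermitian then -∑ i, h.eigenvalues i * Real.logb 2 (h.eigenvalues i) else 0

/-- von Neumann conditional entropy `H(A|B) = S(ρ_AB) - S(ρ_B)`. -/
def condVN {a b : ℕ} (ρ : BMat a b) : ℝ := vnEntropy ρ - vnEntropy (ptraceA ρ)

/-- Classical game reward for a classical bipartite state with joint distribution `q`
(`y` on `A`, `z` on `B`). -/
def ProbTstate {a b c : ℕ} (T : Matrix (Fin a) (Fin c) ℝ)
    (q : Matrix (Fin a) (Fin b) ℝ) : ℝ :=
  ∑ z, ⨆ z' : Fin c, ∑ w, T w z' * sumTopK (w.1 + 1) (fun y => q y z)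




section Aux

lemma unit_star {ι : Type} [Fintype ι] [DecidableEq ι] {A : Matrix ι ι ℂ}
    (hA : A.IsHermitian) :
    star (hA.eigenvectorUnitary : Matrix ι ι ℂ) * (hA.eigenvectorUnitary : Matrix ι ι ℂ) = 1 :=
  Matrix.mem_unitaryGroup_iff'.mp (hA.eigenvectorUnitary).2

lemma trace_spec {ι : Type} [Fintype ι] [DecidableEq ι] {A : Matrix ι ι ℂ}
    (hA : A.IsHermitian) : A.trace = ∑ i, (hA.eigenvalues i : ℂ) := by
  conv_lhs => rw [hA.spectral_theorem, Unitary.conjStarAlgAut_apply]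
  rw [Matrix.trace_mul_cycle, unit_star hA]
  simp [Matrix.trace_diagonal]

lemma trace_sq_spec {ι : Type} [Fintype ι] [DecidableEq ι] {A : Matrix ι ι ℂ}
    (hA : A.IsHermitian) : (A * A).trace = ∑ i, ((hA.eigenvalues i : ℂ))^2 := by
  set U : Matrix ι ι ℂ := (hA.eigenvectorUnitary : Matrix ι ι ℂ)
  set D : Matrix ι ι ℂ := diagonal (RCLike.ofReal ∘ hA.eigenvalues)
  have h1 : A * A = U * (D * D) * star U := by
    conv_lhs => rw [hA.spectral_theorem, Unitary.conjStarAlgAut_apply]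
    have : (U * D * star U) * (U * D * star U) = U * (D * (star U * U) * D) * star U := by
      simp only [mul_assoc]
    rw [this, unit_star hA, mul_one]
  rw [h1, Matrix.trace_mul_cycle, ← mul_assoc, unit_star hA, one_mul]
  simp [D, diagonal_mul_diagonal, Matrix.trace_diagonal, pow_two]

lemma sumTopK_ge {ι : Type} [Fintype ι] [DecidableEq ι] (k : ℕ) (f : ι → ℝ)
    (s : Finset ι) (hs : s.card ≤ k) : ∑ i ∈ s, f i ≤ sumTopK k f := by
  refine Finset.le_sup' (fun s => ∑ i ∈ s, f i) ?_
  exact Finset.mem_filter.mpr ⟨Finset.mem_powerset.mpr (Finset.subset_univ _), hs⟩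

lemma sumTopK_le {ι : Type} [Fintype ι] [DecidableEq ι] (k : ℕ) (f : ι → ℝ) {B : ℝ}
    (h : ∀ s : Finset ι, s.card ≤ k → ∑ i ∈ s, f i ≤ B) : sumTopK k f ≤ B := by
  apply Finset.sup'_le
  intro s hs
  exact h s (Finset.mem_filter.mp hs).2

lemma strictMono_fin_le {c n : ℕ} (g : Fin c → Fin n) (hg : StrictMono g) :
    ∀ j : ℕ, ∀ hj : j < c, j ≤ (g ⟨j, hj⟩ : ℕ) := by
  intro j
  induction j with
  | zero => intro _; exact Nat.zero_le _
  | succ i ih =>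
    intro hj
    have h1 : i < c := Nat.lt_of_succ_lt hj
    have h2 := ih h1
    have h3 : g ⟨i, h1⟩ < g ⟨i + 1, hj⟩ := hg (by simp [Fin.lt_def])
    have h4 := Fin.lt_def.mp h3
    omega

/-- decreasing rearrangement of a nonnegative tuple, padded by zeros. -/
lemma exists_sorted {ι : Type} [Fintype ι] [DecidableEq ι] (f : ι → ℝ)
    (hf : ∀ i, 0 ≤ f i) :
    ∃ h : ℕ → ℝ, Antitone h ∧ (∀ j, 0 ≤ h j) ∧
      (∀ j, Fintype.card ι ≤ j → h j = 0) ∧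
      (∀ G : ℝ → ℝ, ∑ j ∈ Finset.range (Fintype.card ι), G (h j) = ∑ i, G (f i)) ∧
      (∀ k, sumTopK k f = ∑ j ∈ Finset.range k, h j) := by
  set n := Fintype.card ι with hn
  set e : Fin n ≃ ι := (Fintype.equivFin ι).symm with he
  set v : Fin n → ℝ := f ∘ e with hv
  set τ : Equiv.Perm (Fin n) := Tuple.sort (fun i => -(v i)) with hτ
  have hmono : Monotone ((fun i => -(v i)) ∘ τ) := Tuple.monotone_sort _
  set w : Fin n → ℝ := v ∘ τ with hw
  have hwanti : ∀ j j' : Fin n, j ≤ j' → w j' ≤ w j := by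
    intro j j' hjj
    have := hmono hjj
    simp only [Function.comp_apply] at this
    simpa [w] using neg_le_neg_iff.mp this
  have hwf : ∀ j : Fin n, w j = f (e (τ j)) := fun j => rfl
  set h : ℕ → ℝ := fun j => if hj : j < n then w ⟨j, hj⟩ else 0 with hh
  have hnn : ∀ j, 0 ≤ h j := by
    intro j
    by_cases hj : j < n
    · simpa [h, dif_pos hj, hwf] using hf _
    · simp [h, dif_neg hj]
  have hanti : Antitone h := by
    apply antitone_nat_of_succ_le
    intro j
    by_cases h1 : j + 1 < n
    · have h0 : j < n := by omega
      simp only [h, dif_pos h1, dif_pos h0]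
      exact hwanti _ _ (by simp [Fin.le_def])
    · by_cases h0 : j < n
      · simp only [h, dif_neg h1, dif_pos h0]
        exact hf _
      · simp [h, dif_neg h1, dif_neg h0]
  have hzero : ∀ j, n ≤ j → h j = 0 := by
    intro j hj; simp [h, dif_neg (by omega : ¬ j < n)]
  have hsum_filter : ∀ k, ∑ j ∈ Finset.range k, h j
      = ∑ j ∈ Finset.univ.filter (fun j : Fin n => (j : ℕ) < k), w j := by
    intro k
    rw [Finset.sum_filter]
    have h1 : ∀ a : Fin n, (if (a : ℕ) < k then w a else 0) = (if (a : ℕ) < k then h a else 0) := by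
      intro a
      simp [h, dif_pos a.isLt]
    rw [Finset.sum_congr rfl (fun a _ => h1 a),
      Fin.sum_univ_eq_sum_range (fun j => if j < k then h j else 0) n]
    have key : ∑ j ∈ Finset.range (max k n), (if j < k then h j else 0)
        = ∑ j ∈ Finset.range k, h j := by
      rw [← Finset.sum_filter]
      congr 1
      ext j
      simp only [Finset.mem_filter, Finset.mem_range]
      omega
    have h3 : ∑ j ∈ Finset.range n, (if j < k then h j else 0)
        = ∑ j ∈ Finset.range (max k n), (if j < k then h j else 0) := by
      apply Finset.sum_subset (Finset.range_subset_range.mpr (le_max_right k n))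
      intro j _ hj
      have hn' : n ≤ j := by
        rcases Nat.lt_or_ge j n with hlt | hge
        · exact absurd (Finset.mem_range.mpr hlt) hj
        · exact hge
      simp [hzero j hn']
    rw [h3, key]
  -- lower bound: sumTopK k f ≥ ∑ range k h
  have hlow : ∀ k, ∑ j ∈ Finset.range k, h j ≤ sumTopK k f := by
    intro k
    set s : Finset ι := Finset.image (fun j : Fin n => e (τ j))
      (Finset.univ.filter (fun j : Fin n => (j : ℕ) < k)) with hs
    have hinj : Function.Injective (fun j : Fin n => e (τ j)) :=
      e.injective.comp τ.injective
    have hcard : s.card ≤ k := by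
      rw [hs, Finset.card_image_of_injective _ hinj]
      have := Finset.card_le_card_of_injOn
        (s := Finset.univ.filter (fun j : Fin n => (j : ℕ) < k))
        (t := Finset.range k) (fun j : Fin n => (j : ℕ))
        (fun j hj => Finset.mem_range.mpr (Finset.mem_filter.mp hj).2)
        (fun a _ b _ hab => Fin.ext hab)
      simpa using this
    have hsum : ∑ i ∈ s, f i = ∑ j ∈ Finset.range k, h j := by
      rw [hs, Finset.sum_image (fun a _ b _ hab => hinj hab), hsum_filter k]
      exact Finset.sum_congr rfl (fun j _ => (hwf j).symm)
    rw [← hsum]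
    exact sumTopK_ge k f s hcard
  have hup : ∀ k, sumTopK k f ≤ ∑ j ∈ Finset.range k, h j := by
    intro k
    apply sumTopK_le
    intro s hs
    set t : Finset (Fin n) := Finset.image (fun i => τ.symm (e.symm i)) s with ht
    have hinj : Function.Injective (fun i : ι => τ.symm (e.symm i)) :=
      τ.symm.injective.comp e.symm.injective
    have hcard : t.card = s.card := Finset.card_image_of_injective _ hinj
    have hsum : ∑ i ∈ s, f i = ∑ j ∈ t, w j := by
      rw [ht, Finset.sum_image (fun a _ b _ hab => hinj hab)]
      apply Finset.sum_congr rfl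
      intro i _
      rw [hwf]
      simp
    rw [hsum]
    set c := t.card with hc
    set iso := t.orderIsoOfFin hc.symm with hiso
    have hsm : StrictMono (fun r : Fin c => ((iso r : {x // x ∈ t}) : Fin n)) := by
      intro a b hab
      exact iso.strictMono hab
    have hwsum : ∑ j ∈ t, w j = ∑ r : Fin c, w (iso r : {x // x ∈ t}) := by
      rw [← Finset.sum_attach t w]
      exact (Equiv.sum_comp iso.toEquiv (fun x : {x // x ∈ t} => w x)).symm
    rw [hwsum]
    have step : ∀ r : Fin c, w (iso r : {x // x ∈ t}) ≤ h (r : ℕ) := by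
      intro r
      have hle : (r : ℕ) ≤ (((iso r : {x // x ∈ t}) : Fin n) : ℕ) :=
        strictMono_fin_le _ hsm r r.isLt
      have heq : w ((iso r : {x // x ∈ t}) : Fin n)
          = h ((((iso r : {x // x ∈ t}) : Fin n)) : ℕ) := by
        simp [h, dif_pos (((iso r : {x // x ∈ t}) : Fin n)).isLt]
      rw [heq]
      exact hanti hle
    calc ∑ r : Fin c, w (iso r : {x // x ∈ t}) ≤ ∑ r : Fin c, h (r : ℕ) :=
          Finset.sum_le_sum (fun r _ => step r)
      _ = ∑ j ∈ Finset.range c, h j := Fin.sum_univ_eq_sum_range (fun j => h j) c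
      _ ≤ ∑ j ∈ Finset.range k, h j := by
          apply Finset.sum_le_sum_of_subset_of_nonneg
            (Finset.range_subset_range.mpr (hcard ▸ hs))
          exact fun j _ _ => hnn j
  refine ⟨h, hanti, hnn, hzero, ?_, fun k => le_antisymm (hup k) (hlow k)⟩
  intro G
  rw [← Fin.sum_univ_eq_sum_range (fun j => G (h j)) n]
  have h1 : ∀ j : Fin n, G (h j) = G (w j) := by
    intro j; simp [h, dif_pos j.isLt]
  rw [Finset.sum_congr rfl (fun j _ => h1 j)]
  calc ∑ j : Fin n, G (w j) = ∑ j : Fin n, G (v j) := Equiv.sum_comp τ (fun j => G (v j))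
    _ = ∑ i : ι, G (f i) := Equiv.sum_comp e (fun i => G (f i))

lemma apply_entry {ι κ : Type} [Fintype ι] [DecidableEq ι] [Fintype κ]
    (Φ : Matrix ι ι ℂ → Matrix κ κ ℂ) (hΦ : IsLinearMap ℂ Φ) (ρ : Matrix ι ι ℂ)
    (b b' : κ) : Φ ρ b b' = ∑ i, ∑ j, ρ i j * choi Φ (i, b) (j, b') := by
  have hL : Φ ρ = ∑ i, ∑ j, ρ i j • Φ (Matrix.single i j 1) := by
    have h0 : Φ ρ = (IsLinearMap.mk' Φ hΦ) ρ := rfl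
    rw [h0]
    conv_lhs => rw [Matrix.matrix_eq_sum_single ρ]
    rw [map_sum]
    apply Finset.sum_congr rfl
    intro i _
    rw [map_sum]
    apply Finset.sum_congr rfl
    intro j _
    rw [show Matrix.single i j (ρ i j) = ρ i j • Matrix.single i j 1 by
      rw [Matrix.smul_single, smul_eq_mul, mul_one]]
    exact _root_.map_smul (IsLinearMap.mk' Φ hΦ) (ρ i j) _
  rw [hL]
  simp only [Matrix.sum_apply, Matrix.smul_apply, smul_eq_mul]
  rfl

open scoped MatrixOrder in
lemma cp_posSemidef {ι κ : Type} [Fintype ι] [DecidableEq ι] [Fintype κ] [DecidableEq κ]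
    (Φ : Matrix ι ι ℂ → Matrix κ κ ℂ) (hΦ : IsLinearMap ℂ Φ)
    (hc : (choi Φ).PosSemidef) {ρ : Matrix ι ι ℂ} (hρ : ρ.PosSemidef) :
    (Φ ρ).PosSemidef := by
  set A := CFC.sqrt ρ with hA
  have hAherm : A.IsHermitian := (CFC.sqrt_nonneg ρ).posSemidef.1
  have hρA : ∀ i j, ρ i j = ∑ k, star (A k i) * A k j := by
    intro i j
    have h1 : ρ = A * A := (CFC.sqrt_mul_sqrt_self ρ hρ.nonneg).symm
    rw [h1]
    simp only [Matrix.mul_apply]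
    apply Finset.sum_congr rfl
    intro k _
    congr 1
    rw [← Matrix.conjTranspose_apply, hAherm.eq]
  refine Matrix.PosSemidef.of_dotProduct_mulVec_nonneg ?_ ?_
  · rw [Matrix.IsHermitian]
    ext b b'
    rw [Matrix.conjTranspose_apply, apply_entry Φ hΦ ρ, apply_entry Φ hΦ ρ, star_sum]
    rw [Finset.sum_comm]
    apply Finset.sum_congr rfl
    intro i _
    rw [star_sum]
    apply Finset.sum_congr rfl
    intro j _
    rw [star_mul']
    congr 1
    · rw [← Matrix.conjTranspose_apply, hρ.1]
    · rw [← Matrix.conjTranspose_apply, hc.1]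
  · intro x
    set C := choi Φ with hC
    set T : ι → κ → ι → κ → ι → ℂ :=
      fun i b j b' k => star (A k i) * A k j * star (x b) * C (i, b) (j, b') * x b' with hT
    have L1 : star x ⬝ᵥ (Φ ρ) *ᵥ x = ∑ b, ∑ b', ∑ i, ∑ j, ∑ k, T i b j b' k := by
      simp only [dotProduct, Matrix.mulVec, Pi.star_apply, apply_entry Φ hΦ ρ, hρA,
        Finset.sum_mul, Finset.mul_sum]
      refine Finset.sum_congr rfl fun b _ => ?_
      refine Finset.sum_congr rfl fun b' _ => ?_
      refine Finset.sum_congr rfl fun i _ => ?_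
      refine Finset.sum_congr rfl fun j _ => ?_
      refine Finset.sum_congr rfl fun k _ => ?_
      simp only [hT]; ring
    have R1 : ∀ k : ι, star (fun p : ι × κ => A k p.1 * x p.2) ⬝ᵥ
        C *ᵥ (fun p : ι × κ => A k p.1 * x p.2)
        = ∑ b, ∑ b', ∑ i, ∑ j, T i b j b' k := by
      intro k
      simp only [dotProduct, Matrix.mulVec, Pi.star_apply, Fintype.sum_prod_type,
        Finset.sum_mul, Finset.mul_sum]
      calc ∑ i, ∑ b, ∑ j, ∑ b', star (A k i * x b) * (C (i, b) (j, b') * (A k j * x b'))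
          = ∑ i, ∑ b, ∑ b', ∑ j, star (A k i * x b) * (C (i, b) (j, b') * (A k j * x b')) := by
            refine Finset.sum_congr rfl fun i _ => ?_
            refine Finset.sum_congr rfl fun b _ => ?_
            exact Finset.sum_comm
        _ = ∑ b, ∑ i, ∑ b', ∑ j, star (A k i * x b) * (C (i, b) (j, b') * (A k j * x b')) :=
            Finset.sum_comm
        _ = ∑ b, ∑ b', ∑ i, ∑ j, star (A k i * x b) * (C (i, b) (j, b') * (A k j * x b')) := by
            refine Finset.sum_congr rfl fun b _ => ?_
            exact Finset.sum_comm
        _ = ∑ b, ∑ b', ∑ i, ∑ j, T i b j b' k := by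
            refine Finset.sum_congr rfl fun b _ => ?_
            refine Finset.sum_congr rfl fun b' _ => ?_
            refine Finset.sum_congr rfl fun i _ => ?_
            refine Finset.sum_congr rfl fun j _ => ?_
            simp only [hT, star_mul']; ring
    have key : star x ⬝ᵥ (Φ ρ) *ᵥ x = ∑ k, star (fun p : ι × κ => A k p.1 * x p.2) ⬝ᵥ
        C *ᵥ (fun p : ι × κ => A k p.1 * x p.2) := by
      rw [L1]
      simp only [R1]
      calc ∑ b, ∑ b', ∑ i, ∑ j, ∑ k, T i b j b' k
          = ∑ b, ∑ b', ∑ i, ∑ k, ∑ j, T i b j b' k := by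
            refine Finset.sum_congr rfl fun b _ => ?_
            refine Finset.sum_congr rfl fun b' _ => ?_
            refine Finset.sum_congr rfl fun i _ => ?_
            exact Finset.sum_comm
        _ = ∑ b, ∑ b', ∑ k, ∑ i, ∑ j, T i b j b' k := by
            refine Finset.sum_congr rfl fun b _ => ?_
            refine Finset.sum_congr rfl fun b' _ => ?_
            exact Finset.sum_comm
        _ = ∑ b, ∑ k, ∑ b', ∑ i, ∑ j, T i b j b' k := by
            refine Finset.sum_congr rfl fun b _ => ?_
            exact Finset.sum_comm
        _ = ∑ k, ∑ b, ∑ b', ∑ i, ∑ j, T i b j b' k := Finset.sum_comm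
    rw [key]
    exact Finset.sum_nonneg fun k _ => hc.dotProduct_mulVec_nonneg _

lemma cptp_density {ι κ : Type} [Fintype ι] [DecidableEq ι] [Fintype κ] [DecidableEq κ]
    {Φ : Matrix ι ι ℂ → Matrix κ κ ℂ} (hΦ : IsCPTP Φ) {ρ : Matrix ι ι ℂ}
    (hρ : IsDensity ρ) : IsDensity (Φ ρ) :=
  ⟨cp_posSemidef Φ hΦ.1 hΦ.2.2 hρ.1, by rw [hΦ.2.1, hρ.2]⟩

def constE (a : ℕ) {n : ℕ} (σ : Mat n) : Mat a → Mat n := fun Y => Y.trace • σ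

lemma choi_constE (a : ℕ) {n : ℕ} (σ : Mat n) (p q : Fin a × Fin n) :
    choi (constE a σ) p q = (if p.1 = q.1 then 1 else 0) * σ p.2 q.2 := by
  rcases p with ⟨i, b⟩; rcases q with ⟨j, b'⟩
  show (Matrix.trace (Matrix.single i j (1:ℂ)) • σ) b b' = _
  rw [Matrix.smul_apply, smul_eq_mul]
  congr 1
  rw [Matrix.trace]
  simp only [Matrix.diag, Matrix.single, Matrix.of_apply]
  by_cases h : i = j
  · subst h
    simp
  · rw [if_neg h]
    apply Finset.sum_eq_zero
    intro x _
    rw [if_neg]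
    rintro ⟨h1, h2⟩
    exact h (h1.trans h2.symm)

lemma constE_cptp (a : ℕ) {n : ℕ} (σ : Mat n) (hσ : IsDensity σ) (ha : 0 < a) :
    IsCPTP (constE a σ) := by
  refine ⟨⟨?_, ?_⟩, ?_, ?_⟩
  · intro X Y; simp [constE, Matrix.trace_add, add_smul]
  · intro c X; simp [constE, Matrix.trace_smul, smul_smul]
  · intro X
    simp [constE, Matrix.trace_smul, hσ.2]
  · refine Matrix.PosSemidef.of_dotProduct_mulVec_nonneg ?_ ?_
    · rw [Matrix.IsHermitian]
      ext p q
      rw [Matrix.conjTranspose_apply, choi_constE, choi_constE, star_mul']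
      congr 1
      · simp [eq_comm]
      · rw [← Matrix.conjTranspose_apply, hσ.1.1]
    · intro z
      have expand : star z ⬝ᵥ (choi (constE a σ)) *ᵥ z
          = ∑ i : Fin a, star (fun b => z (i, b)) ⬝ᵥ σ *ᵥ (fun b => z (i, b)) := by
        simp only [dotProduct, Matrix.mulVec, Pi.star_apply, Fintype.sum_prod_type,
          choi_constE]
        refine Finset.sum_congr rfl fun i _ => ?_
        refine Finset.sum_congr rfl fun b _ => ?_
        congr 1
        rw [Finset.sum_comm]
        refine Finset.sum_congr rfl fun b' _ => ?_
        simp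
      rw [expand]
      exact Finset.sum_nonneg fun i _ => hσ.1.dotProduct_mulVec_nonneg _

lemma basis_density (n : ℕ) (hn : 0 < n) :
    IsDensity (Matrix.single (⟨0, hn⟩ : Fin n) ⟨0, hn⟩ (1 : ℂ)) := by
  refine ⟨Matrix.PosSemidef.of_dotProduct_mulVec_nonneg ?_ ?_, ?_⟩
  · rw [Matrix.IsHermitian]
    ext i j
    simp [Matrix.conjTranspose_apply, Matrix.single, and_comm]
  · intro x
    have : star x ⬝ᵥ (Matrix.single (⟨0, hn⟩ : Fin n) ⟨0, hn⟩ (1 : ℂ)) *ᵥ x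
        = star (x ⟨0, hn⟩) * x ⟨0, hn⟩ := by
      simp [dotProduct, Matrix.mulVec, Matrix.single, Finset.mul_sum,
        Finset.sum_ite_eq, ite_and]
    rw [this]
    exact star_mul_self_nonneg _
  · simp [Matrix.trace, Matrix.diag, Matrix.single]

/-- lift of a matrix on `Fin m` to `Fin m × Fin 1`. -/
def lift1 {m : ℕ} (B : Mat m) : Matrix (Fin m × Fin 1) (Fin m × Fin 1) ℂ :=
  fun p q => B p.1 q.1

lemma lift1_density {m : ℕ} {B : Mat m} (hB : IsDensity B) : IsDensity (lift1 B) := by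
  refine ⟨Matrix.PosSemidef.of_dotProduct_mulVec_nonneg ?_ ?_, ?_⟩
  · rw [Matrix.IsHermitian]
    ext p q
    rw [Matrix.conjTranspose_apply]
    show star (B q.1 p.1) = B p.1 q.1
    rw [← Matrix.conjTranspose_apply, hB.1.1]
  · intro z
    have : star z ⬝ᵥ (lift1 B) *ᵥ z
        = star (fun i : Fin m => z (i, 0)) ⬝ᵥ B *ᵥ (fun i : Fin m => z (i, 0)) := by
      simp only [dotProduct, Matrix.mulVec, Pi.star_apply, Fintype.sum_prod_type,
        Fin.sum_univ_one, lift1]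
    rw [this]
    exact hB.1.dotProduct_mulVec_nonneg _
  · have h1 : (lift1 B).trace = B.trace := by
      simp [Matrix.trace, Matrix.diag, Fintype.sum_prod_type, Fin.sum_univ_one, lift1]
    rw [h1, hB.2]

lemma lift1_trace_sq {m : ℕ} (B : Mat m) :
    ((lift1 B) * (lift1 B)).trace = (B * B).trace := by
  simp only [Matrix.trace, Matrix.diag, Matrix.mul_apply, Fintype.sum_prod_type,
    Fin.sum_univ_one, lift1]

end Aux


section Aux2

lemma purity_eq {ι : Type} [Fintype ι] [DecidableEq ι] {X : Matrix ι ι ℂ}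
    (hX : X.IsHermitian) :
    (Matrix.trace (X * X)).re = ∑ i, (hX.eigenvalues i) ^ 2 := by
  rw [trace_sq_spec hX]
  rw [Complex.re_sum]
  refine Finset.sum_congr rfl fun i _ => ?_
  rw [← Complex.ofReal_pow, Complex.ofReal_re]

lemma eig_sum_one {ι : Type} [Fintype ι] [DecidableEq ι] {X : Matrix ι ι ℂ}
    (hX : IsDensity X) : ∑ i, hX.1.1.eigenvalues i = 1 := by
  have h := (trace_spec hX.1.1).symm.trans hX.2
  have h2 := congrArg Complex.re h
  rw [Complex.one_re, Complex.re_sum] at h2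
  simpa using h2

lemma purity_nonneg {ι : Type} [Fintype ι] [DecidableEq ι] {X : Matrix ι ι ℂ}
    (hX : IsDensity X) : 0 ≤ (Matrix.trace (X * X)).re := by
  rw [purity_eq hX.1.1]
  positivity

lemma purity_le_one {ι : Type} [Fintype ι] [DecidableEq ι] {X : Matrix ι ι ℂ}
    (hX : IsDensity X) : (Matrix.trace (X * X)).re ≤ 1 := by
  rw [purity_eq hX.1.1]
  have hnn : ∀ i, 0 ≤ hX.1.1.eigenvalues i := fun i => hX.1.eigenvalues_nonneg i
  have hle : ∀ i, hX.1.1.eigenvalues i ≤ 1 := by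
    intro i
    calc hX.1.1.eigenvalues i ≤ ∑ j, hX.1.1.eigenvalues j :=
          Finset.single_le_sum (fun j _ => hnn j) (Finset.mem_univ i)
      _ = 1 := eig_sum_one hX
  calc ∑ i, (hX.1.1.eigenvalues i) ^ 2 ≤ ∑ i, hX.1.1.eigenvalues i := by
        refine Finset.sum_le_sum fun i _ => ?_
        calc (hX.1.1.eigenvalues i)^2 = hX.1.1.eigenvalues i * hX.1.1.eigenvalues i := sq _
          _ ≤ hX.1.1.eigenvalues i * 1 := by
              exact mul_le_mul_of_nonneg_left (hle i) (hnn i)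
          _ = hX.1.1.eigenvalues i := mul_one _
    _ = 1 := eig_sum_one hX

lemma kyFan_density_bounds {ι : Type} [Fintype ι] [DecidableEq ι] {X : Matrix ι ι ℂ}
    (hX : IsDensity X) (k : ℕ) : 0 ≤ kyFan k X ∧ kyFan k X ≤ 1 := by
  obtain ⟨h, hanti, hnn, hzero, hsum, htop⟩ :=
    exists_sorted hX.1.1.eigenvalues (fun i => hX.1.eigenvalues_nonneg i)
  have h1 : ∑ j ∈ Finset.range (Fintype.card ι), h j = 1 := by
    have := hsum id
    simpa using this.trans (eig_sum_one hX)
  rw [kyFan, dif_pos hX.1.1, htop k]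
  constructor
  · exact Finset.sum_nonneg fun j _ => hnn j
  · calc ∑ j ∈ Finset.range k, h j
        ≤ ∑ j ∈ Finset.range (max k (Fintype.card ι)), h j :=
          Finset.sum_le_sum_of_subset_of_nonneg
            (Finset.range_subset_range.mpr (le_max_left _ _)) (fun j _ _ => hnn j)
      _ = ∑ j ∈ Finset.range (Fintype.card ι), h j := by
          symm
          apply Finset.sum_subset (Finset.range_subset_range.mpr (le_max_right _ _))
          intro j _ hj
          rcases Nat.lt_or_ge j (Fintype.card ι) with hlt | hge
          · exact absurd (Finset.mem_range.mpr hlt) hj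
          · exact hzero j hge
      _ = 1 := h1

lemma abel_core (m : ℕ) (g u : ℕ → ℝ) :
    ∑ x ∈ Finset.range m, (g x - g (x + 1)) * (∑ j ∈ Finset.range (x + 1), u j)
      = ∑ j ∈ Finset.range m, (g j - g m) * u j := by
  induction m with
  | zero => simp
  | succ n ih =>
    rw [Finset.sum_range_succ, ih, Finset.sum_range_succ (fun j => (g j - g (n + 1)) * u j),
      Finset.sum_range_succ u]
    have h1 : ∑ j ∈ Finset.range n, (g j - g (n + 1)) * u j
        = ∑ j ∈ Finset.range n, ((g j - g n) * u j + (g n - g (n + 1)) * u j) :=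
      Finset.sum_congr rfl fun j _ => by ring
    rw [h1, Finset.sum_add_distrib, ← Finset.mul_sum]
    ring

lemma abel_div (m : ℕ) (g u : ℕ → ℝ) (hgm : g m = 0) :
    ∑ x ∈ Finset.range m, ((g x - g (x + 1)) / g 0) * (∑ j ∈ Finset.range (x + 1), u j)
      = (∑ j ∈ Finset.range m, g j * u j) / g 0 := by
  have h1 : ∀ x ∈ Finset.range m, ((g x - g (x + 1)) / g 0) * (∑ j ∈ Finset.range (x + 1), u j)
      = ((g x - g (x + 1)) * (∑ j ∈ Finset.range (x + 1), u j)) / g 0 := fun x _ => by ring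
  rw [Finset.sum_congr rfl h1, ← Finset.sum_div, abel_core]
  congr 1
  refine Finset.sum_congr rfl fun j _ => ?_
  rw [hgm]
  ring

lemma lTensor_one {n k : ℕ} (Φ : Mat n → Mat k) (E : Mat 1 → Mat n) :
    lTensorId (fun Y => Φ (E Y)) (1 : BMat 1 1) = lift1 (Φ (E 1)) := by
  funext p q
  show Φ (E fun a b => (1 : BMat 1 1) (a, p.2) (b, q.2)) p.1 q.1 = Φ (E 1) p.1 q.1
  have harg : (fun a b => (1 : BMat 1 1) (a, p.2) (b, q.2)) = (1 : Mat 1) := by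
    funext a b
    have h1 : ((a, p.2) : Fin 1 × Fin 1) = ((b, q.2) : Fin 1 × Fin 1) := Subsingleton.elim _ _
    have hab : a = b := Subsingleton.elim a b
    rw [h1, Matrix.one_apply_eq, hab, Matrix.one_apply_eq]
  rw [harg]

lemma one_density : IsDensity (1 : BMat 1 1) := by
  refine ⟨Matrix.PosSemidef.one, ?_⟩
  simp [Matrix.trace_one]

lemma one_density_mat : IsDensity (1 : Mat 1) := by
  refine ⟨Matrix.PosSemidef.one, ?_⟩
  simp [Matrix.trace_one]

lemma dim_pos {k n : ℕ} (Φ : Mat n → Mat k) (hΦ : IsCPTP Φ) (hn : 0 < n) : 0 < k := by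
  rcases Nat.eq_zero_or_pos k with hk | hk
  · exfalso
    subst hk
    have hρ := basis_density n hn
    have h1 := (cptp_density hΦ hρ).2
    have h0 : Matrix.trace (Φ (Matrix.single (⟨0, hn⟩ : Fin n) ⟨0, hn⟩ (1 : ℂ))) = 0 := by
      simp [Matrix.trace]
    rw [h0] at h1
    exact one_ne_zero h1.symm
  · exact hk

end Aux2

/-- maximal output purity is monotone under channel game-majorization. -/
theorem purity_monotone {nM m nN m' : ℕ} (hnM : 0 < nM) (hnN : 0 < nN)
    (M : Mat nM → Mat m) (N : Mat nN → Mat m') (hM : IsCPTP M) (hN : IsCPTP N)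
    (hmaj : ∀ (dA b ℓ : ℕ) (p : Fin ℓ → ℝ) (ρx : Fin ℓ → BMat dA b),
        (∀ x, 0 ≤ p x) → (∑ x, p x) = 1 → (∀ x, IsDensity (ρx x)) →
        Rch M p ρx ≤ Rch N p ρx) :
    (⨆ ρ : {ρ : Mat nM // IsDensity ρ}, (Matrix.trace (M ρ.1 * M ρ.1)).re) ≤
      ⨆ ρ : {ρ : Mat nN // IsDensity ρ}, (Matrix.trace (N ρ.1 * N ρ.1)).re := by
  classical
  have hm : 0 < m := dim_pos M hM hnM
  have hm' : 0 < m' := dim_pos N hN hnN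
  have hτ0 := basis_density nN hnN
  have hσ0 := basis_density nM hnM
  haveI : Nonempty {ρ : Mat nN // IsDensity ρ} := ⟨⟨_, hτ0⟩⟩
  haveI : Nonempty {ρ : Mat nM // IsDensity ρ} := ⟨⟨_, hσ0⟩⟩
  haveI hEN : Nonempty {E : Mat 1 → Mat nN // IsCPTP E} :=
    ⟨⟨constE 1 _, constE_cptp 1 _ hτ0 one_pos⟩⟩
  have hbddN : BddAbove (Set.range fun ρ : {ρ : Mat nN // IsDensity ρ} =>
      (Matrix.trace (N ρ.1 * N ρ.1)).re) := by
    refine ⟨1, ?_⟩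
    rintro y ⟨τ, rfl⟩
    exact purity_le_one (cptp_density hN τ.2)
  set PN := ⨆ ρ : {ρ : Mat nN // IsDensity ρ}, (Matrix.trace (N ρ.1 * N ρ.1)).re with hPNdef
  have hPN_ub : ∀ τ : {ρ : Mat nN // IsDensity ρ},
      (Matrix.trace (N τ.1 * N τ.1)).re ≤ PN := fun τ => le_ciSup hbddN τ
  have hPN0 : 0 ≤ PN :=
    le_trans (purity_nonneg (cptp_density hN hτ0)) (hPN_ub ⟨_, hτ0⟩)
  apply ciSup_le
  rintro ⟨σ, hσ⟩
  set A := M σ with hAdef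
  have hA : IsDensity A := cptp_density hM hσ
  have hX : IsDensity (lift1 A) := lift1_density hA
  have hcard : Fintype.card (Fin m × Fin 1) = m := by simp
  obtain ⟨g, ganti, gnn, gzero, gsum, gtop⟩ :=
    exists_sorted hX.1.1.eigenvalues (fun i => hX.1.eigenvalues_nonneg i)
  rw [hcard] at gsum gzero
  have hg1 : ∑ j ∈ Finset.range m, g j = 1 := by
    have := gsum id
    simpa using this.trans (eig_sum_one hX)
  have hgsq : ∑ j ∈ Finset.range m, (g j) ^ 2 = (Matrix.trace (A * A)).re := by
    have h1 := gsum (fun t => t ^ 2)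
    rw [h1, ← purity_eq hX.1.1, lift1_trace_sq]
  have hg0 : 0 < g 0 := by
    by_contra hng
    push_neg at hng
    have hsnp : ∀ j ∈ Finset.range m, g j ≤ 0 :=
      fun j _ => le_trans (ganti (Nat.zero_le j)) hng
    have h0 : (1 : ℝ) ≤ 0 := hg1 ▸ Finset.sum_nonpos hsnp
    linarith
  set p : Fin m → ℝ := fun x => (g x.1 - g (x.1 + 1)) / g 0 with hpdef
  have hpnn : ∀ x, 0 ≤ p x :=
    fun x => div_nonneg (sub_nonneg.mpr (ganti (Nat.le_succ _))) hg0.le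
  have hpsum : ∑ x, p x = 1 := by
    rw [show (∑ x, p x) = ∑ x ∈ Finset.range m, (g x - g (x + 1)) / g 0 from
      Fin.sum_univ_eq_sum_range (fun x => (g x - g (x + 1)) / g 0) m]
    rw [← Finset.sum_div, Finset.sum_range_sub' g m, gzero m le_rfl, sub_zero]
    exact div_self hg0.ne'
  have hρdens : ∀ x : Fin m, IsDensity ((fun _ : Fin m => (1 : BMat 1 1)) x) :=
    fun _ => one_density
  have hbeta : ∀ x : Fin m, (fun _ : Fin m => (1 : BMat 1 1)) x = 1 := fun _ => rfl
  -- evaluation of the Ky Fan norms appearing in the game, for an arbitrary channel E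
  -- (stated for N; also used for M)
  -- M side lower bound
  have hMlow : (Matrix.trace (A * A)).re / g 0 ≤ Rch M p (fun _ => (1 : BMat 1 1)) := by
    have hval_le : ∀ E : {E : Mat 1 → Mat nM // IsCPTP E},
        (∑ x, p x * kyFan (x.1 + 1)
          (lTensorId (fun Y => M (E.1 Y)) ((fun _ : Fin m => (1 : BMat 1 1)) x))) ≤ 1 := by
      intro E
      have hBE : IsDensity (lift1 (M (E.1 1))) :=
        lift1_density (cptp_density hM (cptp_density E.2 one_density_mat))
      calc (∑ x, p x * kyFan (x.1 + 1)
            (lTensorId (fun Y => M (E.1 Y)) ((fun _ : Fin m => (1 : BMat 1 1)) x)))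
          ≤ ∑ x, p x * 1 := by
            refine Finset.sum_le_sum fun x _ => ?_
            rw [hbeta x, lTensor_one]
            exact mul_le_mul_of_nonneg_left (kyFan_density_bounds hBE _).2 (hpnn x)
        _ = 1 := by simp only [mul_one]; exact hpsum
    have hbdd : BddAbove (Set.range fun E : {E : Mat 1 → Mat nM // IsCPTP E} =>
        ∑ x, p x * kyFan (x.1 + 1)
          (lTensorId (fun Y => M (E.1 Y)) ((fun _ : Fin m => (1 : BMat 1 1)) x))) := by
      refine ⟨1, ?_⟩
      rintro y ⟨E, rfl⟩
      exact hval_le E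
    have hE0 : IsCPTP (constE 1 σ) := constE_cptp 1 σ hσ one_pos
    have hle := le_ciSup hbdd ⟨constE 1 σ, hE0⟩
    refine le_trans (le_of_eq ?_) hle
    have hE01 : constE 1 σ 1 = σ := by
      show (1 : Mat 1).trace • σ = σ
      rw [Matrix.trace_one]
      norm_num
    have hxval : ∀ x : Fin m,
        kyFan (x.1 + 1) (lTensorId (fun Y => M (constE 1 σ Y))
          ((fun _ : Fin m => (1 : BMat 1 1)) x)) = ∑ j ∈ Finset.range (x.1 + 1), g j := by
      intro x
      rw [hbeta x, lTensor_one, hE01, kyFan, dif_pos hX.1.1, gtop]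
    calc (Matrix.trace (A * A)).re / g 0
        = (∑ j ∈ Finset.range m, g j * g j) / g 0 := by
          rw [← hgsq]
          congr 1
          exact Finset.sum_congr rfl fun j _ => (sq (g j)).symm ▸ by ring
      _ = ∑ x ∈ Finset.range m, ((g x - g (x + 1)) / g 0) *
            (∑ j ∈ Finset.range (x + 1), g j) := (abel_div m g g (gzero m le_rfl)).symm
      _ = ∑ x, p x * kyFan (x.1 + 1) (lTensorId (fun Y => M (constE 1 σ Y))
            ((fun _ : Fin m => (1 : BMat 1 1)) x)) := by
          rw [show (∑ x, p x * kyFan (x.1 + 1) (lTensorId (fun Y => M (constE 1 σ Y))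
              ((fun _ : Fin m => (1 : BMat 1 1)) x)))
              = ∑ x, p x * ∑ j ∈ Finset.range (x.1 + 1), g j from
            Finset.sum_congr rfl fun x _ => by rw [hxval x]]
          exact (Fin.sum_univ_eq_sum_range
            (fun x => ((g x - g (x + 1)) / g 0) * ∑ j ∈ Finset.range (x + 1), g j) m).symm
  -- N side upper bound
  have hNhigh : Rch N p (fun _ => (1 : BMat 1 1))
      ≤ Real.sqrt ((Matrix.trace (A * A)).re) * Real.sqrt PN / g 0 := by
    apply ciSup_le
    intro E
    have hB : IsDensity (N (E.1 1)) := cptp_density hN (cptp_density E.2 one_density_mat)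
    have hY : IsDensity (lift1 (N (E.1 1))) := lift1_density hB
    have hcard' : Fintype.card (Fin m' × Fin 1) = m' := by simp
    obtain ⟨u, uanti, unn, uzero, usum, utop⟩ :=
      exists_sorted hY.1.1.eigenvalues (fun i => hY.1.eigenvalues_nonneg i)
    rw [hcard'] at usum uzero
    have hxval : ∀ x : Fin m,
        kyFan (x.1 + 1) (lTensorId (fun Y => N (E.1 Y))
          ((fun _ : Fin m => (1 : BMat 1 1)) x)) = ∑ j ∈ Finset.range (x.1 + 1), u j := by
      intro x
      rw [hbeta x, lTensor_one, kyFan, dif_pos hY.1.1, utop]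
    have hval : (∑ x, p x * kyFan (x.1 + 1) (lTensorId (fun Y => N (E.1 Y))
        ((fun _ : Fin m => (1 : BMat 1 1)) x)))
        = (∑ j ∈ Finset.range m, g j * u j) / g 0 := by
      rw [show (∑ x, p x * kyFan (x.1 + 1) (lTensorId (fun Y => N (E.1 Y))
          ((fun _ : Fin m => (1 : BMat 1 1)) x)))
          = ∑ x, p x * ∑ j ∈ Finset.range (x.1 + 1), u j from
        Finset.sum_congr rfl fun x _ => by rw [hxval x]]
      rw [Fin.sum_univ_eq_sum_range
        (fun x => ((g x - g (x + 1)) / g 0) * ∑ j ∈ Finset.range (x + 1), u j) m]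
      exact abel_div m g u (gzero m le_rfl)
    rw [hval, div_le_div_iff_of_pos_right hg0]
    -- Cauchy-Schwarz
    have husq : ∑ j ∈ Finset.range m, (u j) ^ 2 ≤ PN := by
      calc ∑ j ∈ Finset.range m, (u j) ^ 2
          ≤ ∑ j ∈ Finset.range (max m m'), (u j) ^ 2 :=
            Finset.sum_le_sum_of_subset_of_nonneg
              (Finset.range_subset_range.mpr (le_max_left _ _)) (fun j _ _ => sq_nonneg _)
        _ = ∑ j ∈ Finset.range m', (u j) ^ 2 := by
            symm
            apply Finset.sum_subset (Finset.range_subset_range.mpr (le_max_right _ _))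
            intro j _ hj
            have hge : m' ≤ j := by
              rcases Nat.lt_or_ge j m' with hlt | hge
              · exact absurd (Finset.mem_range.mpr hlt) hj
              · exact hge
            rw [uzero j hge]
            ring
        _ = (Matrix.trace ((N (E.1 1)) * (N (E.1 1)))).re := by
            have h1 := usum (fun t => t ^ 2)
            rw [h1, ← purity_eq hY.1.1, lift1_trace_sq]
        _ ≤ PN := hPN_ub ⟨E.1 1, cptp_density E.2 one_density_mat⟩
    have hgu_nn : 0 ≤ ∑ j ∈ Finset.range m, g j * u j :=
      Finset.sum_nonneg fun j _ => mul_nonneg (gnn j) (unn j)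
    have hsq : (∑ j ∈ Finset.range m, g j * u j) ^ 2
        ≤ (∑ j ∈ Finset.range m, (g j) ^ 2) * (∑ j ∈ Finset.range m, (u j) ^ 2) :=
      Finset.sum_mul_sq_le_sq_mul_sq (Finset.range m) g u
    calc ∑ j ∈ Finset.range m, g j * u j
        = Real.sqrt ((∑ j ∈ Finset.range m, g j * u j) ^ 2) := (Real.sqrt_sq hgu_nn).symm
      _ ≤ Real.sqrt ((∑ j ∈ Finset.range m, (g j) ^ 2) * (∑ j ∈ Finset.range m, (u j) ^ 2)) :=
          Real.sqrt_le_sqrt hsq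
      _ = Real.sqrt (∑ j ∈ Finset.range m, (g j) ^ 2) *
            Real.sqrt (∑ j ∈ Finset.range m, (u j) ^ 2) :=
          Real.sqrt_mul (Finset.sum_nonneg fun j _ => sq_nonneg _) _
      _ ≤ Real.sqrt ((Matrix.trace (A * A)).re) * Real.sqrt PN := by
          apply mul_le_mul
          · rw [hgsq]
          · exact Real.sqrt_le_sqrt husq
          · exact Real.sqrt_nonneg _
          · exact Real.sqrt_nonneg _
  -- combine
  have hmaj' := hmaj 1 1 m p (fun _ => (1 : BMat 1 1)) hpnn hpsum hρdens
  have hchain := le_trans hMlow (le_trans hmaj' hNhigh)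
  have h2 : (Matrix.trace (A * A)).re
      ≤ Real.sqrt ((Matrix.trace (A * A)).re) * Real.sqrt PN :=
    (div_le_div_iff_of_pos_right hg0).mp hchain
  have ht0 : 0 ≤ (Matrix.trace (A * A)).re := purity_nonneg hA
  have hst : Real.sqrt ((Matrix.trace (A * A)).re) ^ 2 = (Matrix.trace (A * A)).re :=
    Real.sq_sqrt ht0
  have hsP : Real.sqrt PN ^ 2 = PN := Real.sq_sqrt hPN0
  show (Matrix.trace (A * A)).re ≤ PN
  nlinarith [Real.sqrt_nonneg ((Matrix.trace (A * A)).re), Real.sqrt_nonneg PN, hst, hsP, h2,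
    sq_nonneg (Real.sqrt ((Matrix.trace (A * A)).re) - Real.sqrt PN)]

end
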